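/- Let n ≥ 1, let f_0, …, f_n be n+1 polynomials in ℚ[x_0, …, x_{n-1}], and let C be their Dixon cancellation matrix. Then det C lies in the ideal of ℚ[x_0,…,x_{n-1}, x̄_0,…,x̄_{n-1}] generated by the polynomials f_0, …, f_n regarded as polynomials in the unbarred variables (i.e., the images of the f_j under the inclusion ℚ[x_0,…,x_{n-1}] → ℚ[x, x̄]). In particular det C can be written as a linear combination det C = Σ_j K_j f_j with polynomial coefficients K_j. -/

import Mathlib

open MvPolynomial

/-- The `i`-th Dixon substitution homomorphism `φ_i : ℚ[x] → ℚ[x, x̄]`,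
sending `x_k ↦ x̄_k` for `k < i` and `x_k ↦ x_k` for `k ≥ i`.
Here `Sum.inl k` is the unbarred variable `x_k` and `Sum.inr k` is the barred `x̄_k`. -/
noncomputable def dixonPhi (n : ℕ) (i : Fin (n + 1)) :
    MvPolynomial (Fin n) ℚ →ₐ[ℚ] MvPolynomial (Fin n ⊕ Fin n) ℚ :=
  aeval (fun k : Fin n => if (k : ℕ) < (i : ℕ) then X (Sum.inr k) else X (Sum.inl k))

/-- The Dixon cancellation matrix of `f_0, …, f_n`, with entries `C i j = φ_i (f j)`. -/
noncomputable def dixonCancellationMatrix (n : ℕ)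
    (f : Fin (n + 1) → MvPolynomial (Fin n) ℚ) :
    Matrix (Fin (n + 1)) (Fin (n + 1)) (MvPolynomial (Fin n ⊕ Fin n) ℚ) :=
  fun i j => dixonPhi n i (f j)

lemma dixonPhi_zero (n : ℕ) (p : MvPolynomial (Fin n) ℚ) :
    dixonPhi n 0 p = rename Sum.inl p := by
  have h : dixonPhi n 0 = rename Sum.inl :=
    MvPolynomial.algHom_ext fun k => by simp [dixonPhi]
  rw [h]

/-- The determinant of the Dixon cancellation matrix lies in the ideal generated by
the `f_j` regarded as polynomials in the unbarred variables; in particular it is a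
linear combination `det C = Σ_j K_j f_j` with polynomial coefficients. -/
theorem dixon_det_mem_span_unbarred (n : ℕ) (hn : 1 ≤ n)
    (f : Fin (n + 1) → MvPolynomial (Fin n) ℚ) :
    (dixonCancellationMatrix n f).det ∈
      Ideal.span (Set.range fun j : Fin (n + 1) => rename Sum.inl (f j)) := by
  rw [Matrix.det_succ_row_zero]
  refine Ideal.sum_mem _ fun j _ => ?_
  have h0 : dixonCancellationMatrix n f 0 j = rename Sum.inl (f j) := by
    simp [dixonCancellationMatrix, dixonPhi_zero]
  rw [h0]
  exact Ideal.mul_mem_right _ _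
    (Ideal.mul_mem_left _ _ (Ideal.subset_span (Set.mem_range_self j)))
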